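/- Let P be a probability measure on a measurable space X, let k : X × X → ℝ be a symmetric, measurable kernel with 0 < m ≤ k(x,y) ≤ M, let p(x) = ∫_X k(x,y) dP(y), let a(x,y) = k(x,y)/p(x), let (A f)(x) = ∫_X a(x,y) f(y) dP(y), and let S(B) = ∫_B p dP / ∫_X p dP. Then A is self-adjoint with respect to the weighted inner product ⟨f,g⟩_S = ∫_X f g dS: for all f, g ∈ L²(S), ⟨A f, g⟩_S = ⟨f, A g⟩_S. Consequently, if ψ and φ are eigenfunctions of A in L²(S) with distinct eigenvalues, then ⟨ψ, φ⟩_S = 0. -/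

import Mathlib

open MeasureTheory

/-- The diffusion operator `A f (x) = ∫ (k(x,y)/p(x)) f(y) dP(y)` is
self-adjoint with respect to the weighted inner product
`⟨f, g⟩_S = ∫ f g (p/c) dP`, and eigenfunctions with distinct eigenvalues are
orthogonal in this inner product. -/
theorem diffusion_operator_selfadjoint
    {X : Type*} [MeasurableSpace X]
    (P : Measure X) [IsProbabilityMeasure P]
    (k : X → X → ℝ) (hk : Measurable (Function.uncurry k))
    (hsymm : ∀ x y, k x y = k y x)
    (m M : ℝ) (hm : 0 < m)
    (hbound : ∀ x y, m ≤ k x y ∧ k x y ≤ M)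
    (p : X → ℝ) (hp : ∀ x, p x = ∫ y, k x y ∂P)
    (A : (X → ℝ) → (X → ℝ))
    (hA : ∀ f x, A f x = ∫ y, (k x y / p x) * f y ∂P)
    (c : ℝ) (hc : c = ∫ x, p x ∂P) :
    (∀ f g : X → ℝ, MemLp f 2 P → MemLp g 2 P →
      ∫ x, A f x * g x * (p x / c) ∂P = ∫ x, f x * A g x * (p x / c) ∂P) ∧
    (∀ (lam mu : ℝ) (ψ φ : X → ℝ), MemLp ψ 2 P → MemLp φ 2 P →
      (A ψ =ᵐ[P] fun x => lam * ψ x) → (A φ =ᵐ[P] fun x => mu * φ x) →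
      lam ≠ mu → ∫ x, ψ x * φ x * (p x / c) ∂P = 0) := by
  -- basic facts
  have hkpos : ∀ x y, 0 < k x y := fun x y => hm.trans_le (hbound x y).1
  have hknorm : ∀ x y, ‖k x y‖ ≤ M := fun x y => by
    rw [Real.norm_eq_abs, abs_of_pos (hkpos x y)]; exact (hbound x y).2
  have hkmeas : ∀ x, Measurable (k x) := fun x => hk.of_uncurry_left
  have hkint : ∀ x, Integrable (k x) P := fun x =>
    (integrable_const M).mono' (hkmeas x).aestronglyMeasurable
      (Filter.Eventually.of_forall fun y => hknorm x y)
  have hpm : ∀ x, m ≤ p x := fun x => by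
    rw [hp]
    calc m = ∫ _, m ∂P := by simp
    _ ≤ ∫ y, k x y ∂P :=
        integral_mono (integrable_const m) (hkint x) fun y => (hbound x y).1
  have hppos : ∀ x, 0 < p x := fun x => hm.trans_le (hpm x)
  have hpM : ∀ x, p x ≤ M := fun x => by
    rw [hp]
    calc ∫ y, k x y ∂P ≤ ∫ _, M ∂P :=
        integral_mono (hkint x) (integrable_const M) fun y => (hbound x y).2
    _ = M := by simp
  have hpmeas : StronglyMeasurable p := by
    have : StronglyMeasurable fun x => ∫ y, k x y ∂P :=
      hk.stronglyMeasurable.integral_prod_right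
    simpa [funext hp] using this
  have hpint : Integrable p P :=
    (integrable_const M).mono' hpmeas.aestronglyMeasurable
      (Filter.Eventually.of_forall fun x => by
        rw [Real.norm_eq_abs, abs_of_pos (hppos x)]; exact hpM x)
  have hcpos : 0 < c := by
    rw [hc]
    calc (0:ℝ) < m := hm
    _ = ∫ _, m ∂P := by simp
    _ ≤ ∫ x, p x ∂P := integral_mono (integrable_const m) hpint fun x => hpm x
  -- key pointwise identity
  have hApx : ∀ (f : X → ℝ) (x : X), A f x * p x = ∫ y, k x y * f y ∂P := by
    intro f x
    rw [hA]
    have h1 : (fun y => k x y / p x * f y) = fun y => (p x)⁻¹ * (k x y * f y) := by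
      funext y; ring
    rw [h1, integral_const_mul]
    rw [inv_mul_eq_div, div_mul_cancel₀ _ (hppos x).ne']
  -- self-adjointness
  have key : ∀ f g : X → ℝ, MemLp f 2 P → MemLp g 2 P →
      ∫ x, A f x * g x * (p x / c) ∂P = ∫ x, f x * A g x * (p x / c) ∂P := by
    intro f g hf hg
    have hfi : Integrable f P :=
      memLp_one_iff_integrable.mp (hf.mono_exponent (by norm_num))
    have hgi : Integrable g P :=
      memLp_one_iff_integrable.mp (hg.mono_exponent (by norm_num))
    have hint : Integrable (Function.uncurry fun x y => g x * (k x y * f y)) (P.prod P) := by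
      have h1 : Integrable (fun z : X × X => g z.1 * f z.2) (P.prod P) :=
        hgi.mul_prod hfi
      have h2 : Integrable (fun z : X × X => k z.1 z.2 * (g z.1 * f z.2)) (P.prod P) :=
        h1.bdd_mul hk.aestronglyMeasurable (Filter.Eventually.of_forall fun z => hknorm z.1 z.2)
      refine h2.congr (Filter.Eventually.of_forall fun z => ?_)
      simp [Function.uncurry]; ring
    have hswap := integral_integral_swap hint
    calc ∫ x, A f x * g x * (p x / c) ∂P
        = ∫ x, c⁻¹ * ∫ y, g x * (k x y * f y) ∂P ∂P := by
          refine integral_congr_ae (Filter.Eventually.of_forall fun x => ?_)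
          dsimp only
          rw [integral_const_mul, ← hApx f x]
          ring
      _ = c⁻¹ * ∫ x, ∫ y, g x * (k x y * f y) ∂P ∂P := integral_const_mul _ _
      _ = c⁻¹ * ∫ y, ∫ x, g x * (k x y * f y) ∂P ∂P := by rw [hswap]
      _ = ∫ y, f y * A g y * (p y / c) ∂P := by
          rw [← integral_const_mul]
          refine integral_congr_ae (Filter.Eventually.of_forall fun y => ?_)
          dsimp only
          have h3 : (fun x => g x * (k x y * f y)) = fun x => f y * (k y x * g x) := by
            funext x; rw [hsymm x y]; ring
          rw [h3, integral_const_mul, ← hApx g y]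
          ring
  refine ⟨key, ?_⟩
  intro lam mu ψ φ hψ hφ hψe hφe hne
  have h1 := key ψ φ hψ hφ
  have e1 : ∫ x, A ψ x * φ x * (p x / c) ∂P
      = lam * ∫ x, ψ x * φ x * (p x / c) ∂P := by
    rw [← integral_const_mul]
    refine integral_congr_ae ?_
    filter_upwards [hψe] with x hx
    rw [hx]; ring
  have e2 : ∫ x, ψ x * A φ x * (p x / c) ∂P
      = mu * ∫ x, ψ x * φ x * (p x / c) ∂P := by
    rw [← integral_const_mul]
    refine integral_congr_ae ?_
    filter_upwards [hφe] with x hx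
    rw [hx]; ring
  rw [e1, e2] at h1
  have h2 : (lam - mu) * ∫ x, ψ x * φ x * (p x / c) ∂P = 0 := by linarith
  rcases mul_eq_zero.mp h2 with h | h
  · exact absurd (sub_eq_zero.mp h) hne
  · exact h
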